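/- Let T : E → E be α-averaged for some α ∈ (0,1), with nonempty fixed-point set. Then for every z ∈ E, every γ ≥ 0, every t ∈ ℕ, and every j ∈ ℕ with j ≤ t, the marginal fixed-point residual satisfies g_γ^t(z) ≤ sqrt(α / ((1 − α)(t − j + 1))) · (dist(T^j z, fix T) + 2γ). In particular, g_γ^t(z) ≤ min_{j = 0,…,t} sqrt(α / ((1 − α)(t − j + 1))) · (dist(T^j z, fix T) + 2γ). -/

import Mathlib

set_option maxHeartbeats 1000000 in
theorem averaged_marginal_residual_bound
    {E : Type*} [NormedAddCommGroup E] [InnerProductSpace ℝ E] [CompleteSpace E]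
    (T : E → E) (α : ℝ) (hα0 : 0 < α) (hα1 : α < 1)
    (havg : ∃ R : E → E, (∀ x y : E, ‖R x - R y‖ ≤ ‖x - y‖) ∧
        ∀ x : E, T x = (1 - α) • x + α • R x)
    (hfix : (Function.fixedPoints T).Nonempty)
    (z : E) (γ : ℝ) (hγ : 0 ≤ γ) (t : ℕ) :
    ∀ j ≤ t,
      sSup {r : ℝ | ∃ Δ : E, ‖Δ‖ ≤ γ ∧ r = ‖T (T^[t] (z + Δ)) - T^[t] (z + Δ)‖}
        ≤ Real.sqrt (α / ((1 - α) * ((t - j : ℕ) + 1)))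
            * (Metric.infDist (T^[j] z) (Function.fixedPoints T) + 2 * γ) := by
  intro j hj
  obtain ⟨R, hR, hT⟩ := havg
  have hα' : 0 < 1 - α := by linarith
  set c : ℝ := (1 - α) / α with hc
  have hc0 : 0 < c := div_pos hα' hα0
  clear_value c
  -- T is nonexpansive
  have hTne : ∀ x y : E, ‖T x - T y‖ ≤ ‖x - y‖ := by
    intro x y
    rw [hT x, hT y]
    have hrw : ((1-α)•x + α•R x) - ((1-α)•y + α•R y)
        = (1-α)•(x-y) + α•(R x - R y) := by module
    rw [hrw]
    calc ‖(1-α)•(x-y) + α•(R x - R y)‖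
        ≤ ‖(1-α)•(x-y)‖ + ‖α•(R x - R y)‖ := norm_add_le _ _
      _ = (1-α)*‖x-y‖ + α*‖R x - R y‖ := by
          rw [norm_smul, norm_smul, Real.norm_of_nonneg hα'.le,
            Real.norm_of_nonneg hα0.le]
      _ ≤ (1-α)*‖x-y‖ + α*‖x-y‖ := by nlinarith [hR x y]
      _ = ‖x-y‖ := by ring
  -- iterates of T are nonexpansive
  have hiter : ∀ (n : ℕ) (x y : E), ‖T^[n] x - T^[n] y‖ ≤ ‖x - y‖ := by
    intro n
    induction n with
    | zero => intro x y; simp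
    | succ n ih =>
      intro x y
      rw [Function.iterate_succ_apply' T n x, Function.iterate_succ_apply' T n y]
      exact le_trans (hTne _ _) (ih x y)
  -- key averaged inequality
  have key : ∀ (x s : E), s ∈ Function.fixedPoints T →
      ‖T x - s‖^2 + c * ‖T x - x‖^2 ≤ ‖x - s‖^2 := by
    intro x s hs
    have hTs : T s = s := hs
    have hRs : R s = s := by
      have h1 : (1-α)•s + α•R s = s := by rw [← hT s]; exact hTs
      have h2 : α • R s = α • s := by
        have h3 : α • R s - α • s = ((1-α)•s + α•R s) - s := by module
        rw [h1, sub_self] at h3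
        rwa [sub_eq_zero] at h3
      exact smul_right_injective E hα0.ne' h2
    set a : E := x - s with ha
    set b : E := R x - s with hb
    have hba : ‖b‖ ≤ ‖a‖ := by
      have := hR x s
      rwa [hRs] at this
    have h1 : T x - s = (1-α)•a + α•b := by rw [hT x, ha, hb]; module
    have h2 : T x - x = α•(b - a) := by rw [hT x, ha, hb]; module
    rw [h1, h2]
    have e1 : ‖(1-α)•a + α•b‖^2
        = (1-α)^2*‖a‖^2 + 2*((1-α)*α)*(inner ℝ a b) + α^2*‖b‖^2 := by
      rw [norm_add_sq_real, norm_smul, norm_smul, real_inner_smul_left,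
        real_inner_smul_right, Real.norm_of_nonneg hα'.le,
        Real.norm_of_nonneg hα0.le]
      ring
    have e2 : ‖α•(b-a)‖^2 = α^2 * ‖b - a‖^2 := by
      rw [norm_smul, Real.norm_of_nonneg hα0.le, mul_pow]
    have e3 : ‖b - a‖^2 = ‖b‖^2 - 2*(inner ℝ a b) + ‖a‖^2 := by
      rw [norm_sub_sq_real, real_inner_comm b a]
    have hca : c * α^2 = (1-α)*α := by
      rw [hc]
      field_simp
    have hsq : ‖b‖^2 ≤ ‖a‖^2 := by nlinarith [norm_nonneg a, norm_nonneg b]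
    rw [e1, e2, e3]
    nlinarith [hsq]
  -- bound is nonneg
  set m : ℝ := ((t - j : ℕ) : ℝ) + 1 with hm
  have hm0 : 0 < m := by positivity
  set K : ℝ := Real.sqrt (α / ((1-α) * m)) with hK
  have hK0 : 0 < K := Real.sqrt_pos.mpr (div_pos hα0 (mul_pos hα' hm0))
  clear_value m K
  have hrhs : 0 ≤ K * (Metric.infDist (T^[j] z) (Function.fixedPoints T) + 2 * γ) := by
    have := Metric.infDist_nonneg (s := Function.fixedPoints T) (x := T^[j] z)
    positivity
  apply Real.sSup_le _ hrhs
  rintro r ⟨Δ, hΔ, rfl⟩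
  set w : E := z + Δ with hw
  set res : ℕ → ℝ := fun k => ‖T (T^[k] w) - T^[k] w‖ with hres
  clear_value w res
  have hres0 : ∀ k, 0 ≤ res k := by intro k; simp only [hres]; exact norm_nonneg _
  have hmono : ∀ k, res (k+1) ≤ res k := by
    intro k
    have h1 : T^[k+1] w = T (T^[k] w) := Function.iterate_succ_apply' T k w
    simp only [hres, h1]
    exact hTne _ _
  have hmono' : ∀ k n, res (k + n) ≤ res k := by
    intro k n
    induction n with
    | zero => simp
    | succ n ih => calc res (k + (n+1)) = res ((k+n)+1) := by ring_nf
                    _ ≤ res (k+n) := hmono _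
                    _ ≤ res k := ih
  -- main telescoping bound
  have main : ∀ s ∈ Function.fixedPoints T, ∀ (n k : ℕ),
      ((n:ℝ)+1) * (c * res (k+n)^2) ≤ ‖T^[k] w - s‖^2 := by
    intro s hs n
    induction n with
    | zero =>
      intro k
      have hk := key (T^[k] w) s hs
      simp only [hres, Nat.add_zero]
      push_cast
      nlinarith [sq_nonneg ‖T (T^[k] w) - s‖]
    | succ n ih =>
      intro k
      have hk := key (T^[k] w) s hs
      have h1 : T^[k+1] w = T (T^[k] w) := Function.iterate_succ_apply' T k w
      have ihk := ih (k+1)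
      have hmm : res (k + (n+1)) ≤ res k := hmono' k (n+1)
      have heq : (k+1) + n = k + (n+1) := by ring
      rw [heq] at ihk
      have hr0 := hres0 (k + (n+1))
      have hresk : res k = ‖T (T^[k] w) - T^[k] w‖ := by simp only [hres]
      have hsq : res (k + (n+1))^2 ≤ res k^2 := by nlinarith
      have hstep : ‖T^[k+1] w - s‖^2 + c * res k ^2 ≤ ‖T^[k] w - s‖^2 := by
        rw [h1, hresk]
        exact hk
      have h4 : c * res (k+(n+1))^2 ≤ c * res k^2 :=
        mul_le_mul_of_nonneg_left hsq hc0.le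
      have hexp : ((n:ℝ)+1+1)*(c*res (k+(n+1))^2)
          = ((n:ℝ)+1)*(c*res (k+(n+1))^2) + c*res (k+(n+1))^2 := by ring
      push_cast
      linarith [ihk, hstep, h4, hexp]
  -- conclude
  have hjt : j + (t - j) = t := Nat.add_sub_cancel' hj
  have hbound : ∀ s ∈ Function.fixedPoints T,
      res t ≤ K * (‖T^[j] z - s‖ + γ) := by
    intro s hs
    have hmain := main s hs (t - j) j
    rw [hjt] at hmain
    -- res t ≤ K * ‖T^[j] w - s‖
    have hres2 : res t ^ 2 ≤ (α / ((1-α)*m)) * ‖T^[j] w - s‖^2 := by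
      have hmain' : m * (c * res t ^ 2) ≤ ‖T^[j] w - s‖^2 := by
        rw [hm]; exact hmain
      have hEq : (α/((1-α)*m)) * (m * (c * res t ^2)) = res t ^2 := by
        rw [hc]
        field_simp
      calc res t ^2 = (α/((1-α)*m)) * (m * (c * res t ^2)) := hEq.symm
        _ ≤ (α/((1-α)*m)) * ‖T^[j] w - s‖^2 := by
            apply mul_le_mul_of_nonneg_left hmain' (by positivity)
    have hstep1 : res t ≤ K * ‖T^[j] w - s‖ := by
      have := Real.sqrt_le_sqrt hres2
      rw [Real.sqrt_sq (hres0 t)] at this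
      rw [Real.sqrt_mul (by positivity) , Real.sqrt_sq (norm_nonneg _), ← hK] at this
      exact this
    have hstep2 : ‖T^[j] w - s‖ ≤ ‖T^[j] z - s‖ + γ := by
      calc ‖T^[j] w - s‖ = ‖(T^[j] w - T^[j] z) + (T^[j] z - s)‖ := by abel_nf
        _ ≤ ‖T^[j] w - T^[j] z‖ + ‖T^[j] z - s‖ := norm_add_le _ _
        _ ≤ ‖w - z‖ + ‖T^[j] z - s‖ := by linarith [hiter j w z]
        _ ≤ γ + ‖T^[j] z - s‖ := by
            have : w - z = Δ := by rw [hw]; abel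
            rw [this]; linarith
        _ = ‖T^[j] z - s‖ + γ := by ring
    calc res t ≤ K * ‖T^[j] w - s‖ := hstep1
      _ ≤ K * (‖T^[j] z - s‖ + γ) := by
          apply mul_le_mul_of_nonneg_left hstep2 hK0.le
  -- pass to infDist
  have hinf : (res t - K * (2*γ)) / K ≤ Metric.infDist (T^[j] z) (Function.fixedPoints T) := by
    by_contra h
    push_neg at h
    obtain ⟨y, hy, hlt⟩ := (Metric.infDist_lt_iff hfix).mp h
    rw [dist_eq_norm] at hlt
    have hb := hbound y hy
    rw [lt_div_iff₀ hK0] at hlt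
    have e : K * (‖T^[j] z - y‖ + γ) = ‖T^[j] z - y‖ * K + K * γ := by ring
    have hKγ : 0 ≤ K * γ := by positivity
    linarith only [hb, hlt, e, hKγ]
  rw [div_le_iff₀ hK0] at hinf
  calc ‖T (T^[t] w) - T^[t] w‖ = res t := by simp only [hres]
    _ ≤ K * (Metric.infDist (T^[j] z) (Function.fixedPoints T) + 2*γ) := by
        have e2 : K * (Metric.infDist (T^[j] z) (Function.fixedPoints T) + 2*γ)
            = Metric.infDist (T^[j] z) (Function.fixedPoints T) * K + K * (2*γ) := by ring
        linarith only [hinf, e2]
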